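/- arXiv:1412.3512 — 5 statements merged into one kernel-verified Lean document; each statement's English description precedes it below -/
import Mathlib

section
/- A nonempty permutation π of {1,…,n} avoids the classical pattern 132 if and only if π can be written uniquely as α ⊖ (β ⊕ 1) for some (possibly empty) 132-avoiding permutations α and β. -/
open Equiv Finset

/-- π avoids the classical pattern 132. -/
def avoids132 {n : ℕ} (π : Equiv.Perm (Fin n)) : Prop :=
  ¬ ∃ i j k : Fin n, i < j ∧ j < k ∧ π i < π k ∧ π k < π j

/-- π avoids the classical pattern 231. -/
def avoids231 {n : ℕ} (π : Equiv.Perm (Fin n)) : Prop :=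
  ¬ ∃ i j k : Fin n, i < j ∧ j < k ∧ π k < π i ∧ π i < π j

/-- π avoids the classical pattern 312. -/
def avoids312 {n : ℕ} (π : Equiv.Perm (Fin n)) : Prop :=
  ¬ ∃ i j k : Fin n, i < j ∧ j < k ∧ π j < π k ∧ π k < π i

/-- Direct sum α ⊕ β of permutations. -/
def dsum {a b : ℕ} (α : Equiv.Perm (Fin a)) (β : Equiv.Perm (Fin b)) :
    Equiv.Perm (Fin (a + b)) :=
  finSumFinEquiv.symm.trans ((Equiv.sumCongr α β).trans finSumFinEquiv)

/-- Skew sum α ⊖ β of permutations. -/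
def ssum {a b : ℕ} (α : Equiv.Perm (Fin a)) (β : Equiv.Perm (Fin b)) :
    Equiv.Perm (Fin (a + b)) :=
  finSumFinEquiv.symm.trans ((Equiv.sumCongr α β).trans
    ((Equiv.sumComm (Fin a) (Fin b)).trans
      (finSumFinEquiv.trans (finCongr (Nat.add_comm b a)))))

/-- Transport a permutation of Fin m along an equality m = n. -/
def castPerm {m n : ℕ} (h : m = n) (π : Equiv.Perm (Fin m)) : Equiv.Perm (Fin n) :=
  Equiv.permCongr (finCongr h) π

/-- Number of descents. -/
def des {n : ℕ} (π : Equiv.Perm (Fin n)) : ℕ :=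
  (Finset.univ.filter (fun p : Fin n × Fin n =>
    (p.1 : ℕ) + 1 = (p.2 : ℕ) ∧ π p.2 < π p.1)).card

/-- Number of occurrences of the vincular pattern 2-\underline{31}. -/
def occ2_31 {n : ℕ} (π : Equiv.Perm (Fin n)) : ℕ :=
  (Finset.univ.filter (fun p : Fin n × Fin n × Fin n =>
    p.1 < p.2.1 ∧ (p.2.1 : ℕ) + 1 = (p.2.2 : ℕ) ∧
      π p.2.2 < π p.1 ∧ π p.1 < π p.2.1)).card

/-- Number of occurrences of the vincular pattern 2-\underline{13}. -/
def occ2_13 {n : ℕ} (π : Equiv.Perm (Fin n)) : ℕ :=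
  (Finset.univ.filter (fun p : Fin n × Fin n × Fin n =>
    p.1 < p.2.1 ∧ (p.2.1 : ℕ) + 1 = (p.2.2 : ℕ) ∧
      π p.2.1 < π p.1 ∧ π p.1 < π p.2.2)).card

/-- Number of occurrences of the vincular pattern \underline{21}-3. -/
def occ21_3 {n : ℕ} (π : Equiv.Perm (Fin n)) : ℕ :=
  (Finset.univ.filter (fun p : Fin n × Fin n × Fin n =>
    (p.1 : ℕ) + 1 = (p.2.1 : ℕ) ∧ p.2.1 < p.2.2 ∧
      π p.2.1 < π p.1 ∧ π p.1 < π p.2.2)).card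

/-- Number of occurrences of the vincular pattern \underline{23}-1. -/
def occ23_1 {n : ℕ} (π : Equiv.Perm (Fin n)) : ℕ :=
  (Finset.univ.filter (fun p : Fin n × Fin n × Fin n =>
    (p.1 : ℕ) + 1 = (p.2.1 : ℕ) ∧ p.2.1 < p.2.2 ∧
      π p.2.2 < π p.1 ∧ π p.1 < π p.2.1)).card

/-- Number of occurrences of the vincular pattern 3-\underline{12}. -/
def occ3_12 {n : ℕ} (π : Equiv.Perm (Fin n)) : ℕ :=
  (Finset.univ.filter (fun p : Fin n × Fin n × Fin n =>
    p.1 < p.2.1 ∧ (p.2.1 : ℕ) + 1 = (p.2.2 : ℕ) ∧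
      π p.2.1 < π p.2.2 ∧ π p.2.2 < π p.1)).card

/-- Number of occurrences of the vincular pattern \underline{31}-2. -/
def occ31_2 {n : ℕ} (π : Equiv.Perm (Fin n)) : ℕ :=
  (Finset.univ.filter (fun p : Fin n × Fin n × Fin n =>
    (p.1 : ℕ) + 1 = (p.2.1 : ℕ) ∧ p.2.1 < p.2.2 ∧
      π p.2.1 < π p.2.2 ∧ π p.2.2 < π p.1)).card

/-- Number of right-to-left maxima. -/
def rlmax {n : ℕ} (π : Equiv.Perm (Fin n)) : ℕ :=
  (Finset.univ.filter (fun i : Fin n => ∀ j, i < j → π j < π i)).card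

/-- Number of right-to-left minima. -/
def rlmin {n : ℕ} (π : Equiv.Perm (Fin n)) : ℕ :=
  (Finset.univ.filter (fun i : Fin n => ∀ j, i < j → π i < π j)).card

/-- Occurrences of the pattern 1-2 ending at the last position: indices i < n-1 with π_i < π_{n-1} (plus the anchor). -/
def stat12end {n : ℕ} (π : Equiv.Perm (Fin n)) : ℕ :=
  (Finset.univ.filter (fun p : Fin n × Fin n =>
    p.1 < p.2 ∧ (p.2 : ℕ) + 1 = n ∧ π p.1 < π p.2)).card

/-- Occurrences of the pattern 2-1 ending at the last position. -/
def stat21end {n : ℕ} (π : Equiv.Perm (Fin n)) : ℕ :=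
  (Finset.univ.filter (fun p : Fin n × Fin n =>
    p.1 < p.2 ∧ (p.2 : ℕ) + 1 = n ∧ π p.2 < π p.1)).card

section Aux

lemma dsum_lt {a b : ℕ} (α : Equiv.Perm (Fin a)) (β : Equiv.Perm (Fin b))
    (x : Fin (a + b)) (hx : x.val < a) :
    ((dsum α β) x).val = (α ⟨x.val, hx⟩).val := by
  have : x = Fin.castAdd b ⟨x.val, hx⟩ := by ext; rfl
  conv_lhs => rw [this]
  rw [dsum]
  simp only [Equiv.trans_apply, finSumFinEquiv_symm_apply_castAdd, Equiv.sumCongr_apply,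
    Sum.map_inl, finSumFinEquiv_apply_left]
  rfl

lemma dsum_ge {a b : ℕ} (α : Equiv.Perm (Fin a)) (β : Equiv.Perm (Fin b))
    (x : Fin (a + b)) (hx : a ≤ x.val) :
    ((dsum α β) x).val = a + (β ⟨x.val - a, by omega⟩).val := by
  have : x = Fin.natAdd a ⟨x.val - a, by omega⟩ := by ext; simp; omega
  conv_lhs => rw [this]
  rw [dsum]
  simp only [Equiv.trans_apply, finSumFinEquiv_symm_apply_natAdd, Equiv.sumCongr_apply,
    Sum.map_inr, finSumFinEquiv_apply_right]
  rfl

lemma ssum_lt {a b : ℕ} (α : Equiv.Perm (Fin a)) (β : Equiv.Perm (Fin b))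
    (x : Fin (a + b)) (hx : x.val < a) :
    ((ssum α β) x).val = b + (α ⟨x.val, hx⟩).val := by
  have : x = Fin.castAdd b ⟨x.val, hx⟩ := by ext; rfl
  conv_lhs => rw [this]
  rw [ssum]
  simp only [Equiv.trans_apply, finSumFinEquiv_symm_apply_castAdd, Equiv.sumCongr_apply,
    Sum.map_inl, Equiv.sumComm_apply, Sum.swap_inl, finSumFinEquiv_apply_right]
  rfl

lemma ssum_ge {a b : ℕ} (α : Equiv.Perm (Fin a)) (β : Equiv.Perm (Fin b))
    (x : Fin (a + b)) (hx : a ≤ x.val) :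
    ((ssum α β) x).val = (β ⟨x.val - a, by omega⟩).val := by
  have : x = Fin.natAdd a ⟨x.val - a, by omega⟩ := by ext; simp; omega
  conv_lhs => rw [this]
  rw [ssum]
  simp only [Equiv.trans_apply, finSumFinEquiv_symm_apply_natAdd, Equiv.sumCongr_apply,
    Sum.map_inr, Equiv.sumComm_apply, Sum.swap_inr, finSumFinEquiv_apply_left]
  rfl

lemma castPerm_val {m n : ℕ} (h : m = n) (σ : Equiv.Perm (Fin m)) (i : Fin n) :
    ((castPerm h σ) i).val = (σ ⟨i.val, h ▸ i.isLt⟩).val := by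
  subst h; rfl

/-- Position < a : value is (b+1) + α. -/
lemma tau_lo {a b n : ℕ} (h : a + (b + 1) = n) (α : Equiv.Perm (Fin a))
    (β : Equiv.Perm (Fin b)) (i : Fin n) (hi : i.val < a) :
    ((castPerm h (ssum α (dsum β (1 : Equiv.Perm (Fin 1))))) i).val
      = (b + 1) + (α ⟨i.val, hi⟩).val := by
  rw [castPerm_val, ssum_lt _ _ _ hi]

/-- Position in [a, a+b) : value is β. -/
lemma tau_mid {a b n : ℕ} (h : a + (b + 1) = n) (α : Equiv.Perm (Fin a))
    (β : Equiv.Perm (Fin b)) (i : Fin n) (h1 : a ≤ i.val) (h2 : i.val < a + b) :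
    ((castPerm h (ssum α (dsum β (1 : Equiv.Perm (Fin 1))))) i).val
      = (β ⟨i.val - a, by omega⟩).val := by
  rw [castPerm_val, ssum_ge _ _ _ h1, dsum_lt _ _ _ (by simp; omega)]

/-- Position a+b (the last one) : value is b. -/
lemma tau_hi {a b n : ℕ} (h : a + (b + 1) = n) (α : Equiv.Perm (Fin a))
    (β : Equiv.Perm (Fin b)) (i : Fin n) (hi : i.val = a + b) :
    ((castPerm h (ssum α (dsum β (1 : Equiv.Perm (Fin 1))))) i).val = b := by
  rw [castPerm_val, ssum_ge _ _ _ (by show a ≤ i.val; omega),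
    dsum_ge _ _ _ (by show b ≤ i.val - a; omega)]
  have : ∀ y : Fin 1, ((1 : Equiv.Perm (Fin 1)) y).val = 0 := fun y => by
    simp [Fin.val_eq_zero]
  rw [this]
  omega

lemma card_filter_comp {n : ℕ} (π : Equiv.Perm (Fin n)) (p : Fin n → Prop)
    [DecidablePred p] :
    ((Finset.univ.filter fun i => p (π i)).card = (Finset.univ.filter p).card) := by
  apply Finset.card_bij (fun i _ => π i)
  · intro x hx; simp only [Finset.mem_filter, Finset.mem_univ, true_and] at hx ⊢; exact hx
  · intro x _ y _ hxy; exact π.injective hxy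
  · intro y hy
    refine ⟨π.symm y, ?_, by simp⟩
    simp only [Finset.mem_filter, Finset.mem_univ, true_and] at hy ⊢
    simpa using hy

lemma avoids_ssum {a b n : ℕ} (h : a + (b + 1) = n) (α : Equiv.Perm (Fin a))
    (β : Equiv.Perm (Fin b)) (hα : avoids132 α) (hβ : avoids132 β) :
    avoids132 (castPerm h (ssum α (dsum β (1 : Equiv.Perm (Fin 1))))) := by
  have hle : ∀ x : Fin n, a ≤ x.val →
      ((castPerm h (ssum α (dsum β (1 : Equiv.Perm (Fin 1))))) x).val ≤ b := by
    intro x hx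
    rcases eq_or_lt_of_le (Nat.le_of_lt_succ (by omega : x.val < (a + b) + 1)) with h'|h'
    · rw [tau_hi h α β x h']
    · rw [tau_mid h α β x hx h']; exact Nat.le_of_lt (Fin.isLt _)
  rintro ⟨i, j, k, hij, hjk, h1, h2⟩
  rw [Fin.lt_def] at hij hjk h1 h2
  rcases lt_or_ge k.val a with hk | hk
  · -- all three in the α block
    have hj : j.val < a := lt_trans hjk hk
    have hi : i.val < a := lt_trans hij hj
    rw [tau_lo h α β i hi, tau_lo h α β k hk] at h1
    rw [tau_lo h α β k hk, tau_lo h α β j hj] at h2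
    refine hα ⟨⟨i.val, hi⟩, ⟨j.val, hj⟩, ⟨k.val, hk⟩, ?_, ?_, ?_, ?_⟩ <;>
      simp only [Fin.lt_def, Fin.mk_lt_mk] <;> omega
  · rcases lt_or_ge i.val a with hi | hi
    · -- τ i ≥ b+1 but τ k ≤ b contradicts τ i < τ k
      have e1 := tau_lo h α β i hi
      have e2 := hle k hk
      omega
    · have hj : a ≤ j.val := le_trans hi (Nat.le_of_lt hij)
      rcases eq_or_lt_of_le (Nat.le_of_lt_succ (by omega : k.val < (a + b) + 1)) with h'|h'
      · -- k is the last position: τ k = b > τ j impossible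
        have hjlt : j.val < a + b := by omega
        rw [tau_hi h α β k h'] at h2
        rw [tau_mid h α β j hj hjlt] at h2
        have := Fin.isLt (β ⟨j.val - a, by omega⟩)
        omega
      · -- all three in the β block
        have hjlt : j.val < a + b := lt_trans hjk h'
        have hilt : i.val < a + b := lt_trans hij hjlt
        rw [tau_mid h α β i hi hilt, tau_mid h α β k hk h'] at h1
        rw [tau_mid h α β k hk h', tau_mid h α β j hj hjlt] at h2
        refine hβ ⟨⟨i.val - a, by omega⟩, ⟨j.val - a, by omega⟩, ⟨k.val - a, by omega⟩,
          ?_, ?_, ?_, ?_⟩ <;> simp only [Fin.lt_def, Fin.mk_lt_mk] <;> omega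

end Aux

theorem stmt1 {n : ℕ} (hn : 0 < n) (π : Equiv.Perm (Fin n)) :
    avoids132 π ↔
      ∃! d : Σ a : ℕ, Σ b : ℕ, Equiv.Perm (Fin a) × Equiv.Perm (Fin b),
        avoids132 d.2.2.1 ∧ avoids132 d.2.2.2 ∧
        ∃ h : d.1 + (d.2.1 + 1) = n,
          π = castPerm h (ssum d.2.2.1 (dsum d.2.2.2 (1 : Equiv.Perm (Fin 1)))) := by
  have hn1 : n - 1 < n := by omega
  constructor
  · intro hπ
    obtain ⟨b, hbn, hπL⟩ : ∃ b, b < n ∧ (π ⟨n - 1, hn1⟩).val = b :=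
      ⟨_, (π ⟨n - 1, hn1⟩).isLt, rfl⟩
    obtain ⟨a, hab⟩ : ∃ a, a + (b + 1) = n := ⟨n - (b + 1), by omega⟩
    -- no small value before a big value (except at the last position)
    have key : ∀ i j : Fin n, i < j → (j : ℕ) < n - 1 → (π i).val < b → (π j).val < b := by
      intro i j hij hj hi
      by_contra hc
      push_neg at hc
      have hne : (π j).val ≠ b := by
        intro he
        have : j = ⟨n - 1, hn1⟩ := π.injective (Fin.ext (by omega))
        have := congrArg Fin.val this
        simp at this; omega
      refine hπ ⟨i, j, ⟨n - 1, hn1⟩, hij, ?_, ?_, ?_⟩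
      · rw [Fin.lt_def]; exact hj
      · rw [Fin.lt_def]; omega
      · rw [Fin.lt_def]; omega
    have hS : (Finset.univ.filter fun i => b < (π i).val).card = a := by
      rw [card_filter_comp π (fun w => b < w.val)]
      have : (Finset.univ.filter fun w : Fin n => b < w.val) = Finset.Ioi (π ⟨n - 1, hn1⟩) := by
        ext w
        simp [Fin.lt_def, hπL]
      rw [this, Fin.card_Ioi]
      omega
    have hT : (Finset.univ.filter fun i => (π i).val < b).card = b := by
      rw [card_filter_comp π (fun w => w.val < b)]
      have : (Finset.univ.filter fun w : Fin n => w.val < b) = Finset.Iio (π ⟨n - 1, hn1⟩) := by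
        ext w
        simp [Fin.lt_def, hπL]
      rw [this, Fin.card_Iio]
      omega
    -- positions before a carry the large values
    have high : ∀ i : Fin n, i.val < a → b < (π i).val := by
      intro i hi
      by_contra hc
      push_neg at hc
      have hne : (π i).val ≠ b := by
        intro he
        have : i = ⟨n - 1, hn1⟩ := π.injective (Fin.ext (by omega))
        have := congrArg Fin.val this
        simp at this; omega
      have hilow : (π i).val < b := by omega
      have hsub : (Finset.univ.filter fun j => b < (π j).val) ⊆ Finset.Iio i := by
        intro j hj
        simp only [Finset.mem_filter, Finset.mem_univ, true_and] at hj
        simp only [Finset.mem_Iio]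
        rw [Fin.lt_def]
        by_contra hc2
        push_neg at hc2
        have hjne : i.val ≠ j.val := by
          intro he
          have : π i = π j := congrArg π (Fin.ext he)
          have := congrArg Fin.val this
          omega
        have hjL : (j : ℕ) < n - 1 := by
          have : j.val ≠ n - 1 := by
            intro he
            have : j = ⟨n - 1, hn1⟩ := Fin.ext he
            rw [this] at hj
            omega
          omega
        have := key i j (by rw [Fin.lt_def]; omega) hjL hilow
        omega
      have := Finset.card_le_card hsub
      rw [hS, Fin.card_Iio] at this
      omega
    -- positions from a on (except the last) carry the small values
    have low : ∀ i : Fin n, a ≤ i.val → (i : ℕ) < n - 1 → (π i).val < b := by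
      intro i hi1 hi2
      by_contra hc
      push_neg at hc
      have hne : (π i).val ≠ b := by
        intro he
        have : i = ⟨n - 1, hn1⟩ := π.injective (Fin.ext (by omega))
        have := congrArg Fin.val this
        simp at this; omega
      have hihigh : b < (π i).val := by omega
      have hLmem : (⟨n - 1, hn1⟩ : Fin n) ∈ Finset.Ioi i := by
        simp only [Finset.mem_Ioi]
        rw [Fin.lt_def]
        exact hi2
      have hsub : (Finset.univ.filter fun j => (π j).val < b) ⊆ (Finset.Ioi i).erase ⟨n - 1, hn1⟩ := by
        intro j hj
        simp only [Finset.mem_filter, Finset.mem_univ, true_and] at hj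
        have hjne : j ≠ ⟨n - 1, hn1⟩ := by
          intro he
          rw [he] at hj
          omega
        refine Finset.mem_erase.mpr ⟨hjne, ?_⟩
        simp only [Finset.mem_Ioi]
        rw [Fin.lt_def]
        by_contra hc2
        push_neg at hc2
        have hjval : j.val ≠ i.val := by
          intro he
          have : π j = π i := congrArg π (Fin.ext he)
          have := congrArg Fin.val this
          omega
        have := key j i (by rw [Fin.lt_def]; omega) hi2 hj
        omega
      have hcard := Finset.card_le_card hsub
      rw [hT, Finset.card_erase_of_mem hLmem, Fin.card_Ioi] at hcard
      omega
    -- construct α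
    have hwa : ∀ x : Fin a, (x : ℕ) < n := fun x => by omega
    have hwb : ∀ x : Fin b, a + (x : ℕ) < n := fun x => by omega
    let f : Fin a → Fin a := fun x => ⟨(π ⟨x.val, hwa x⟩).val - (b + 1), by
      have h1 := high ⟨x.val, hwa x⟩ x.isLt
      have h2 := (π ⟨x.val, hwa x⟩).isLt
      omega⟩
    have hfval : ∀ x : Fin a, (f x).val = (π ⟨x.val, hwa x⟩).val - (b + 1) := fun _ => rfl
    have hfinj : Function.Injective f := by
      intro x y hxy
      have hx := high ⟨x.val, hwa x⟩ x.isLt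
      have hy := high ⟨y.val, hwa y⟩ y.isLt
      have hv := congrArg Fin.val hxy
      rw [hfval, hfval] at hv
      have : π ⟨x.val, hwa x⟩ = π ⟨y.val, hwa y⟩ := Fin.ext (by omega)
      have := congrArg Fin.val (π.injective this)
      exact Fin.ext (by simpa using this)
    let α : Equiv.Perm (Fin a) := Equiv.ofBijective f (Finite.injective_iff_bijective.mp hfinj)
    have hαval : ∀ x : Fin a, (α x).val = (π ⟨x.val, hwa x⟩).val - (b + 1) := fun _ => rfl
    -- construct β
    let g : Fin b → Fin b := fun x => ⟨(π ⟨a + x.val, hwb x⟩).val, by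
      exact low ⟨a + x.val, hwb x⟩ (by show a ≤ a + x.val; omega) (by show a + x.val < n - 1; omega)⟩
    have hgval : ∀ x : Fin b, (g x).val = (π ⟨a + x.val, hwb x⟩).val := fun _ => rfl
    have hginj : Function.Injective g := by
      intro x y hxy
      have hv := congrArg Fin.val hxy
      rw [hgval, hgval] at hv
      have : π ⟨a + x.val, hwb x⟩ = π ⟨a + y.val, hwb y⟩ := Fin.ext hv
      have := congrArg Fin.val (π.injective this)
      exact Fin.ext (by simp at this; omega)
    let β : Equiv.Perm (Fin b) := Equiv.ofBijective g (Finite.injective_iff_bijective.mp hginj)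
    have hβval : ∀ x : Fin b, (β x).val = (π ⟨a + x.val, hwb x⟩).val := fun _ => rfl
    -- α avoids 132
    have hα : avoids132 α := by
      rintro ⟨i, j, k, hij, hjk, h1, h2⟩
      rw [Fin.lt_def] at hij hjk h1 h2
      rw [hαval, hαval] at h1
      rw [hαval, hαval] at h2
      have hhi := high ⟨i.val, hwa i⟩ i.isLt
      have hhj := high ⟨j.val, hwa j⟩ j.isLt
      have hhk := high ⟨k.val, hwa k⟩ k.isLt
      refine hπ ⟨⟨i.val, hwa i⟩, ⟨j.val, hwa j⟩, ⟨k.val, hwa k⟩, ?_, ?_, ?_, ?_⟩ <;>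
        simp only [Fin.lt_def, Fin.mk_lt_mk] <;> omega
    -- β avoids 132
    have hβ : avoids132 β := by
      rintro ⟨i, j, k, hij, hjk, h1, h2⟩
      rw [Fin.lt_def] at hij hjk h1 h2
      rw [hβval, hβval] at h1
      rw [hβval, hβval] at h2
      refine hπ ⟨⟨a + i.val, hwb i⟩, ⟨a + j.val, hwb j⟩, ⟨a + k.val, hwb k⟩, ?_, ?_, ?_, ?_⟩ <;>
        simp only [Fin.lt_def, Fin.mk_lt_mk] <;> omega
    -- π equals the composite
    have hπeq : π = castPerm hab (ssum α (dsum β (1 : Equiv.Perm (Fin 1)))) := by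
      apply Equiv.ext
      intro i
      apply Fin.ext
      rcases lt_or_ge i.val a with hi | hi
      · rw [tau_lo hab α β i hi, hαval]
        have he : (⟨((⟨i.val, hi⟩ : Fin a) : ℕ), hwa ⟨i.val, hi⟩⟩ : Fin n) = i := Fin.ext rfl
        rw [he]
        have := high i (by omega)
        omega
      · rcases lt_or_ge i.val (a + b) with hmid | hhi
        · rw [tau_mid hab α β i hi hmid, hβval]
          have he : (⟨a + ((⟨i.val - a, by omega⟩ : Fin b) : ℕ), hwb ⟨i.val - a, by omega⟩⟩ : Fin n) = i :=
            Fin.ext (by show a + (i.val - a) = i.val; omega)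
          rw [he]
        · have hieq : i.val = a + b := by omega
          rw [tau_hi hab α β i hieq]
          have : i = ⟨n - 1, hn1⟩ := Fin.ext (by show i.val = n - 1; omega)
          rw [this, hπL]
    refine ⟨⟨a, b, (α, β)⟩, ⟨hα, hβ, hab, hπeq⟩, ?_⟩
    rintro ⟨a', b', α', β'⟩ ⟨hα', hβ', hab', hπeq'⟩
    dsimp only at hα' hβ' hab' hπeq'
    have hb' : b = b' := by
      have := tau_hi hab' α' β' ⟨n - 1, hn1⟩ (by show n - 1 = a' + b'; omega)
      rw [← hπeq'] at this
      omega
    subst hb'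
    have ha' : a = a' := by omega
    subst ha'
    have hαeq : α' = α := by
      apply Equiv.ext
      intro x
      apply Fin.ext
      have hxa : ((⟨x.val, hwa x⟩ : Fin n) : ℕ) < a := x.isLt
      have h1 := tau_lo hab' α' β' ⟨x.val, hwa x⟩ hxa
      rw [← hπeq'] at h1
      have h1' : (π ⟨x.val, hwa x⟩).val = (b + 1) + (α' x).val := h1
      have h2 := hαval x
      have := high ⟨x.val, hwa x⟩ x.isLt
      omega
    have hβeq : β' = β := by
      apply Equiv.ext
      intro x
      apply Fin.ext
      have hx1 : a ≤ ((⟨a + x.val, hwb x⟩ : Fin n) : ℕ) := by show a ≤ a + x.val; omega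
      have hx2 : ((⟨a + x.val, hwb x⟩ : Fin n) : ℕ) < a + b := by show a + x.val < a + b; omega
      have h1 := tau_mid hab' α' β' ⟨a + x.val, hwb x⟩ hx1 hx2
      rw [← hπeq'] at h1
      have h1' : (π ⟨a + x.val, hwb x⟩).val = (β' ⟨a + x.val - a, by omega⟩).val := h1
      have he : (⟨a + x.val - a, by omega⟩ : Fin b) = x := Fin.ext (by show a + x.val - a = x.val; omega)
      rw [he] at h1'
      have h2 := hβval x
      omega
    rw [hαeq, hβeq]
  · rintro ⟨⟨a, b, α, β⟩, ⟨hα, hβ, hab, heq⟩, -⟩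
    rw [heq]
    exact avoids_ssum hab α β hα hβ
end

section
/- Define a map φ on 132-avoiding permutations recursively by φ(empty) = empty and φ(α ⊖ (β ⊕ 1)) = φ(β) ⊖ (φ(α) ⊕ 1), using the unique decomposition of a nonempty 132-avoiding permutation as α ⊖ (β ⊕ 1) with α, β 132-avoiding. Then φ maps S_n(132) to itself and is an involution, i.e., φ(φ(π)) = π for all π ∈ S_n(132). -/
open Equiv Finset

lemma dsum_apply_lt {a b : ℕ} (α : Equiv.Perm (Fin a)) (β : Equiv.Perm (Fin b)) (i : Fin (a+b)) (h : i.val < a) :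
    ((dsum α β) i).val = (α ⟨i.val, h⟩).val := by
  have : i = Fin.castAdd b ⟨i.val, h⟩ := by ext; rfl
  conv_lhs => rw [this]
  simp only [dsum, Equiv.trans_apply, finSumFinEquiv_symm_apply_castAdd,
    Equiv.sumCongr_apply, Sum.map_inl, finSumFinEquiv_apply_left, Fin.coe_castAdd]

lemma dsum_apply_ge {a b : ℕ} (α : Equiv.Perm (Fin a)) (β : Equiv.Perm (Fin b)) (i : Fin (a+b)) (h : a ≤ i.val) :
    ((dsum α β) i).val = a + (β ⟨i.val - a, by omega⟩).val := by
  have : i = Fin.natAdd a ⟨i.val - a, by omega⟩ := by ext; simp; omega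
  conv_lhs => rw [this]
  simp only [dsum, Equiv.trans_apply, finSumFinEquiv_symm_apply_natAdd,
    Equiv.sumCongr_apply, Sum.map_inr, finSumFinEquiv_apply_right, Fin.coe_natAdd]

lemma ssum_apply_lt {a b : ℕ} (α : Equiv.Perm (Fin a)) (β : Equiv.Perm (Fin b)) (i : Fin (a+b)) (h : i.val < a) :
    ((ssum α β) i).val = b + (α ⟨i.val, h⟩).val := by
  have : i = Fin.castAdd b ⟨i.val, h⟩ := by ext; rfl
  conv_lhs => rw [this]
  simp only [ssum, Equiv.trans_apply, finSumFinEquiv_symm_apply_castAdd,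
    Equiv.sumCongr_apply, Sum.map_inl, Equiv.sumComm_apply, Sum.swap_inl,
    finSumFinEquiv_apply_right, finCongr_apply, Fin.coe_cast, Fin.coe_natAdd]

lemma ssum_apply_ge {a b : ℕ} (α : Equiv.Perm (Fin a)) (β : Equiv.Perm (Fin b)) (i : Fin (a+b)) (h : a ≤ i.val) :
    ((ssum α β) i).val = (β ⟨i.val - a, by omega⟩).val := by
  have : i = Fin.natAdd a ⟨i.val - a, by omega⟩ := by ext; simp; omega
  conv_lhs => rw [this]
  simp only [ssum, Equiv.trans_apply, finSumFinEquiv_symm_apply_natAdd,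
    Equiv.sumCongr_apply, Sum.map_inr, Equiv.sumComm_apply, Sum.swap_inr,
    finSumFinEquiv_apply_left, finCongr_apply, Fin.coe_cast, Fin.coe_castAdd]

lemma castPerm_rfl {n : ℕ} (π : Equiv.Perm (Fin n)) : castPerm rfl π = π := by
  ext i
  simp [castPerm]

lemma castPerm_castPerm {m n k : ℕ} (h : m = n) (h' : n = k) (π : Equiv.Perm (Fin m)) :
    castPerm h' (castPerm h π) = castPerm (h.trans h') π := by
  subst h h'; rw [castPerm_rfl]

lemma avoids132_castPerm {m n : ℕ} (h : m = n) (π : Equiv.Perm (Fin m)) (hπ : avoids132 π) :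
    avoids132 (castPerm h π) := by
  subst h; rwa [castPerm_rfl]

lemma castPerm_apply_val {m n : ℕ} (h : m = n) (π : Equiv.Perm (Fin m)) (i : Fin n) :
    ((castPerm h π) i).val = (π ⟨i.val, h ▸ i.isLt⟩).val := by
  subst h; rw [castPerm_rfl]

lemma sigma_lt {a b : ℕ} (α : Equiv.Perm (Fin a)) (β : Equiv.Perm (Fin b))
    (x : Fin (a+(b+1))) (h : x.val < a) :
    ((ssum α (dsum β 1)) x).val = (b+1) + (α ⟨x.val, h⟩).val :=
  ssum_apply_lt α (dsum β 1) x h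

lemma sigma_mid {a b : ℕ} (α : Equiv.Perm (Fin a)) (β : Equiv.Perm (Fin b))
    (x : Fin (a+(b+1))) (h1 : a ≤ x.val) (h2 : x.val < a + b) :
    ((ssum α (dsum β 1)) x).val = (β ⟨x.val - a, by omega⟩).val := by
  rw [ssum_apply_ge α (dsum β 1) x h1, dsum_apply_lt β 1 _ (by simpa using by omega)]

lemma sigma_end {a b : ℕ} (α : Equiv.Perm (Fin a)) (β : Equiv.Perm (Fin b))
    (x : Fin (a+(b+1))) (h : x.val = a + b) :
    ((ssum α (dsum β 1)) x).val = b := by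
  rw [ssum_apply_ge α (dsum β 1) x (by omega), dsum_apply_ge β 1 _ (by simpa using by omega)]
  simp

lemma avoids132_ssum_dsum {a b : ℕ} (α : Equiv.Perm (Fin a)) (β : Equiv.Perm (Fin b))
    (hα : avoids132 α) (hβ : avoids132 β) :
    avoids132 (ssum α (dsum β (1 : Equiv.Perm (Fin 1)))) := by
  rintro ⟨i, j, k, hij, hjk, h1, h2⟩
  rw [Fin.lt_def] at hij hjk h1 h2
  rcases lt_or_ge k.val a with hk | hk
  · have hj : j.val < a := by omega
    have hi : i.val < a := by omega
    rw [sigma_lt α β i hi, sigma_lt α β k hk] at h1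
    rw [sigma_lt α β j hj, sigma_lt α β k hk] at h2
    exact hα ⟨⟨i.val, hi⟩, ⟨j.val, hj⟩, ⟨k.val, hk⟩, by rw [Fin.lt_def]; exact hij,
      by rw [Fin.lt_def]; exact hjk, by rw [Fin.lt_def]; omega, by rw [Fin.lt_def]; omega⟩
  · have hσk : ((ssum α (dsum β 1)) k).val ≤ b := by
      rcases lt_or_ge k.val (a + b) with hkb | hkb
      · have := sigma_mid α β k hk hkb
        have := (β ⟨k.val - a, by omega⟩).isLt
        omega
      · have := sigma_end α β k (by omega)
        omega
    have hi : a ≤ i.val := by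
      by_contra hia
      push_neg at hia
      have := sigma_lt α β i hia
      omega
    have hj : a ≤ j.val := by omega
    rcases lt_or_ge k.val (a + b) with hkb | hkb
    · have e1 := sigma_mid α β i hi (by omega)
      have e2 := sigma_mid α β j hj (by omega)
      have e3 := sigma_mid α β k hk hkb
      exact hβ ⟨⟨i.val - a, by omega⟩, ⟨j.val - a, by omega⟩, ⟨k.val - a, by omega⟩,
        by rw [Fin.lt_def]; simp; omega, by rw [Fin.lt_def]; simp; omega,
        by rw [Fin.lt_def]; omega, by rw [Fin.lt_def]; omega⟩
    · have e2 := sigma_mid α β j hj (by omega)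
      have e3 := sigma_end α β k (by omega)
      have := (β ⟨j.val - a, by omega⟩).isLt
      omega

lemma decomp132 {m : ℕ} (π : Equiv.Perm (Fin (m+1))) (hπ : avoids132 π) :
    ∃ (a b : ℕ) (h : a + (b+1) = m+1) (α : Equiv.Perm (Fin a)) (β : Equiv.Perm (Fin b)),
      avoids132 α ∧ avoids132 β ∧ π = castPerm h (ssum α (dsum β 1)) := by
  set last : Fin (m+1) := ⟨m, by omega⟩ with hlast
  set b := (π last).val with hbdef
  have hbm : b ≤ m := by have := (π last).isLt; omega
  set a := m - b with hadef
  -- downward closure of high values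
  have dc : ∀ i j : Fin (m+1), i.val < j.val → b < (π j).val → b < (π i).val := by
    intro i j hij hj
    by_contra hi
    push_neg at hi
    have hne : (π i).val ≠ b := by
      intro he
      have h1 : π i = π last := Fin.ext he
      have h2 : i = last := π.injective h1
      have : i.val = m := by rw [h2]
      have := j.isLt
      omega
    have hjne : j.val ≠ m := by
      intro he
      have : j = last := Fin.ext he
      rw [this] at hj
      omega
    have hjm : j.val < m := by have := j.isLt; omega
    exact hπ ⟨i, j, last, by rw [Fin.lt_def]; exact hij, by rw [Fin.lt_def]; exact hjm,
      by rw [Fin.lt_def]; omega, by rw [Fin.lt_def]; exact hj⟩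
  -- cardinality of the set of high positions
  have hT : (univ.filter (fun i : Fin (m+1) => b < (π i).val)).card = a := by
    have himg : (univ.filter (fun i : Fin (m+1) => b < (π i).val)).image π
        = univ.filter (fun v : Fin (m+1) => b < v.val) := by
      ext v
      simp only [Finset.mem_image, Finset.mem_filter, Finset.mem_univ, true_and]
      constructor
      · rintro ⟨i, hi, rfl⟩; exact hi
      · intro hv; exact ⟨π.symm v, by simpa using hv, by simp⟩
    have hc1 := Finset.card_image_of_injective
      (univ.filter fun i : Fin (m+1) => b < (π i).val) π.injective
    rw [himg] at hc1
    have hc2 : (univ.filter (fun v : Fin (m+1) => b < v.val)) = Finset.Ioi (π last) := by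
      ext v
      simp only [Finset.mem_filter, Finset.mem_univ, true_and, Finset.mem_Ioi, Fin.lt_def]
      exact Iff.rfl
    rw [hc2, Fin.card_Ioi] at hc1
    omega
  -- characterization of high positions
  have key : ∀ i : Fin (m+1), b < (π i).val ↔ i.val < a := by
    intro i
    constructor
    · intro hi
      by_contra hia
      push_neg at hia
      have hsub : Finset.Iic i ⊆ univ.filter (fun j : Fin (m+1) => b < (π j).val) := by
        intro j hj
        rw [Finset.mem_Iic] at hj
        rw [Finset.mem_filter]
        refine ⟨Finset.mem_univ _, ?_⟩
        rcases eq_or_lt_of_le hj with he | hl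
        · rw [he]; exact hi
        · exact dc j i hl hi
      have := Finset.card_le_card hsub
      rw [Fin.card_Iic, hT] at this
      omega
    · intro hia
      by_contra hi
      push_neg at hi
      have hsub : univ.filter (fun j : Fin (m+1) => b < (π j).val) ⊆ Finset.Iio i := by
        intro j hj
        rw [Finset.mem_filter] at hj
        rw [Finset.mem_Iio]
        by_contra hji
        push_neg at hji
        rcases eq_or_lt_of_le hji with he | hl
        · rw [← he] at hj; omega
        · have := dc i j hl hj.2; omega
      have := Finset.card_le_card hsub
      rw [Fin.card_Iio, hT] at this
      omega
  -- middle values are low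
  have hmidv : ∀ i : Fin (m+1), a ≤ i.val → i.val < m → (π i).val < b := by
    intro i h1 h2
    have h3 : ¬ b < (π i).val := by rw [key]; omega
    have h4 : (π i).val ≠ b := by
      intro he
      have : i = last := π.injective (Fin.ext he)
      have : i.val = m := by rw [this]
      omega
    omega
  -- build α
  have posa : ∀ i : Fin a, i.val < m + 1 := by intro i; have := i.isLt; omega
  have hαv : ∀ i : Fin a, b < (π ⟨i.val, posa i⟩).val := by
    intro i
    rw [key]
    exact i.isLt
  set fa : Fin a → Fin a := fun i =>
    ⟨(π ⟨i.val, posa i⟩).val - (b+1), by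
      have := (π ⟨i.val, posa i⟩).isLt
      have := hαv i
      omega⟩ with hfa
  have fainj : Function.Injective fa := by
    intro x y hxy
    have hx := hαv x
    have hy := hαv y
    have hval : (π ⟨x.val, posa x⟩).val = (π ⟨y.val, posa y⟩).val := by
      have := congrArg Fin.val hxy
      simp only [hfa] at this
      omega
    have h5 := π.injective (Fin.ext hval)
    have h6 := congrArg Fin.val h5
    simp only [] at h6
    exact Fin.ext h6
  set α : Equiv.Perm (Fin a) := Equiv.ofBijective fa (Finite.injective_iff_bijective.mp fainj)
    with hαd
  have hαap : ∀ i : Fin a, (α i).val = (π ⟨i.val, posa i⟩).val - (b+1) := fun i => rfl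
  -- build β
  have posb : ∀ j : Fin b, a + j.val < m + 1 := by intro j; have := j.isLt; omega
  set fb : Fin b → Fin b := fun j =>
    ⟨(π ⟨a + j.val, posb j⟩).val, by
      apply hmidv _ (by simp) (by have := j.isLt; simp; omega)⟩ with hfb
  have fbinj : Function.Injective fb := by
    intro x y hxy
    have h0 := congrArg Fin.val hxy
    have hval : (π ⟨a + x.val, posb x⟩).val = (π ⟨a + y.val, posb y⟩).val := h0
    have h5 := π.injective (Fin.ext hval)
    have h6 := congrArg Fin.val h5
    simp only [Fin.mk.injEq] at h5
    exact Fin.ext (by omega)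

  set β : Equiv.Perm (Fin b) := Equiv.ofBijective fb (Finite.injective_iff_bijective.mp fbinj)
    with hβd
  have hβap : ∀ j : Fin b, (β j).val = (π ⟨a + j.val, posb j⟩).val := fun j => rfl
  -- α avoids 132
  have hαav : avoids132 α := by
    rintro ⟨i, j, k, hij, hjk, h1, h2⟩
    rw [Fin.lt_def] at hij hjk h1 h2
    rw [hαap i, hαap k] at h1
    rw [hαap j, hαap k] at h2
    have hi := hαv i; have hj := hαv j; have hk := hαv k
    exact hπ ⟨⟨i.val, posa i⟩, ⟨j.val, posa j⟩, ⟨k.val, posa k⟩,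
      by rw [Fin.lt_def]; exact hij, by rw [Fin.lt_def]; exact hjk,
      by rw [Fin.lt_def]; omega, by rw [Fin.lt_def]; omega⟩
  -- β avoids 132
  have hβav : avoids132 β := by
    rintro ⟨i, j, k, hij, hjk, h1, h2⟩
    rw [Fin.lt_def] at hij hjk h1 h2
    rw [hβap i, hβap k] at h1
    rw [hβap j, hβap k] at h2
    exact hπ ⟨⟨a + i.val, posb i⟩, ⟨a + j.val, posb j⟩, ⟨a + k.val, posb k⟩,
      by rw [Fin.lt_def]; simp; omega, by rw [Fin.lt_def]; simp; omega,
      by rw [Fin.lt_def]; omega, by rw [Fin.lt_def]; omega⟩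
  refine ⟨a, b, by omega, α, β, hαav, hβav, ?_⟩
  apply Equiv.ext
  intro i
  apply Fin.ext
  rw [castPerm_apply_val]
  rcases lt_or_ge i.val a with hia | hia
  · rw [sigma_lt α β _ hia]
    rw [hαap ⟨i.val, hia⟩]
    have : (⟨(⟨i.val, hia⟩ : Fin a).val, posa ⟨i.val, hia⟩⟩ : Fin (m+1)) = i := Fin.ext rfl
    rw [this]
    have hv : b < (π i).val := by rw [key]; exact hia
    omega
  · rcases lt_or_ge i.val (a + b) with hib | hib
    · rw [sigma_mid α β _ hia hib]
      rw [hβap ⟨i.val - a, by omega⟩]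
      have : (⟨a + (⟨i.val - a, by omega⟩ : Fin b).val, posb ⟨i.val - a, by omega⟩⟩ : Fin (m+1)) = i :=
        Fin.ext (show a + (i.val - a) = i.val by omega)
      rw [this]
    · rw [sigma_end α β _ (show i.val = a + b by have := i.isLt; omega)]
      have : i = last := Fin.ext (show i.val = m by have := i.isLt; omega)
      rw [this]

theorem stmt3
    (φ : ∀ n : ℕ, Equiv.Perm (Fin n) → Equiv.Perm (Fin n))
    (hrec : ∀ (a b : ℕ) (α : Equiv.Perm (Fin a)) (β : Equiv.Perm (Fin b)),
      avoids132 α → avoids132 β →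
      φ (a + (b + 1)) (ssum α (dsum β (1 : Equiv.Perm (Fin 1)))) =
        castPerm (show b + (a + 1) = a + (b + 1) by omega)
          (ssum (φ b β) (dsum (φ a α) (1 : Equiv.Perm (Fin 1))))) :
    ∀ (n : ℕ) (π : Equiv.Perm (Fin n)), avoids132 π →
      avoids132 (φ n π) ∧ φ n (φ n π) = π := by
  have hφcast : ∀ (p q : ℕ) (hpq : p = q) (σ : Equiv.Perm (Fin p)),
      φ q (castPerm hpq σ) = castPerm hpq (φ p σ) := by
    intro p q hpq σ
    subst hpq
    rw [castPerm_rfl, castPerm_rfl]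
  intro n
  induction n using Nat.strong_induction_on with
  | _ n ih =>
    cases n with
    | zero =>
      intro π hπ
      constructor
      · rintro ⟨i, -⟩
        exact i.elim0
      · apply Equiv.ext
        intro i
        exact i.elim0
    | succ m =>
      intro π hπ
      obtain ⟨a, b, h, α, β, hαav, hβav, hπeq⟩ := decomp132 π hπ
      obtain ⟨hA, hAi⟩ := ih a (by omega) α hαav
      obtain ⟨hB, hBi⟩ := ih b (by omega) β hβav
      have h2 : b + (a + 1) = a + (b + 1) := by omega
      have e1 : φ (m+1) π =
          castPerm (h2.trans h) (ssum (φ b β) (dsum (φ a α) (1 : Equiv.Perm (Fin 1)))) := by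
        rw [hπeq, hφcast _ _ h, hrec a b α β hαav hβav, castPerm_castPerm]
      constructor
      · rw [e1]
        exact avoids132_castPerm _ _ (avoids132_ssum_dsum _ _ hB hA)
      · rw [e1, hφcast _ _ (h2.trans h), hrec b a (φ b β) (φ a α) hB hA, hAi, hBi,
          castPerm_castPerm, hπeq]
end

section
/- For any permutation π ∈ S_n (not necessarily pattern-avoiding), the number of occurrences of the vincular pattern 2-\underline{13} in π plus the number of indices i < n with π_i > π_n (occurrences of 2-1 ending at the last position) equals the number of occurrences of the vincular pattern 2-\underline{31} in π plus the number of descents of π. -/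
open Equiv Finset

lemma card_prod_eq_sum {α β : Type*} [Fintype α] [Fintype β]
    (P : α → β → Prop) [∀ a b, Decidable (P a b)] :
    (univ.filter (fun p : α × β => P p.1 p.2)).card
      = ∑ b : β, (univ.filter (fun a => P a b)).card := by
  simp only [Finset.card_filter]
  rw [Fintype.sum_prod_type]
  exact Finset.sum_comm

lemma sum_adj_pairs {N : ℕ} (f : Fin (N+1) × Fin (N+1) → ℕ) :
    ∑ q ∈ univ.filter (fun q : Fin (N+1) × Fin (N+1) => (q.1 : ℕ) + 1 = (q.2 : ℕ)), f q
      = ∑ m : Fin N, f (Fin.castSucc m, Fin.succ m) := by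
  apply Finset.sum_bij' (i := fun q hq => (⟨(q.1 : ℕ), by
      simp only [mem_filter] at hq
      have := q.2.isLt; omega⟩ : Fin N))
    (j := fun m _ => (Fin.castSucc m, Fin.succ m))
  case hi => intro a ha; exact mem_univ _
  case hj =>
    intro a ha
    simp only [mem_filter, mem_univ, true_and]
    simp [Fin.val_succ]
  case left_neg =>
    intro a ha
    simp only [mem_filter, mem_univ, true_and] at ha
    apply Prod.ext
    · apply Fin.ext; simp
    · apply Fin.ext; simp [Fin.val_succ]; omega
  case right_neg =>
    intro a ha; apply Fin.ext; simp
  case h =>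
    intro a ha
    simp only [mem_filter, mem_univ, true_and] at ha
    congr 1
    apply Prod.ext
    · apply Fin.ext; simp
    · apply Fin.ext; simp [Fin.val_succ]; omega

theorem stmt9 (n : ℕ) (π : Equiv.Perm (Fin n)) :
    occ2_13 π + stat21end π = occ2_31 π + des π := by
  cases n with
  | zero => simp [occ2_13, occ2_31, des, stat21end]
  | succ N =>
    set F : Fin (N+1) → ℕ := fun j => (univ.filter (fun i => i < j ∧ π j < π i)).card
      with hF
    -- stat21end = F last
    have hst : stat21end π = F (Fin.last N) := by
      rw [stat21end, card_prod_eq_sum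
        (fun (i : Fin (N+1)) (j : Fin (N+1)) => i < j ∧ (j : ℕ) + 1 = N + 1 ∧ π j < π i)]
      rw [Finset.sum_eq_single (Fin.last N)]
      · rw [hF]
        congr 1
        apply Finset.filter_congr
        intro i _
        simp [Fin.val_last]
      · intro j _ hj
        rw [Finset.card_eq_zero, Finset.filter_eq_empty_iff]
        intro i _
        rintro ⟨-, h2, -⟩
        exact hj (Fin.ext (by simp [Fin.val_last]; omega))
      · intro h; exact absurd (mem_univ _) h
    -- occ2_13 as sum over Fin N
    have h13 : occ2_13 π = ∑ m : Fin N,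
        (univ.filter (fun i => i < Fin.castSucc m ∧
          π (Fin.castSucc m) < π i ∧ π i < π (Fin.succ m))).card := by
      rw [occ2_13, card_prod_eq_sum
        (fun (i : Fin (N+1)) (q : Fin (N+1) × Fin (N+1)) =>
          i < q.1 ∧ (q.1 : ℕ) + 1 = (q.2 : ℕ) ∧ π q.1 < π i ∧ π i < π q.2)]
      rw [← sum_adj_pairs (fun q => (univ.filter
        (fun i => i < q.1 ∧ π q.1 < π i ∧ π i < π q.2)).card)]
      rw [Finset.sum_filter]
      apply Finset.sum_congr rfl
      intro q _
      by_cases hadj : (q.1 : ℕ) + 1 = (q.2 : ℕ)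
      · simp only [hadj, if_true]
        congr 1
        apply Finset.filter_congr
        intro i _
        simp [hadj]
      · simp only [hadj, if_false]
        rw [Finset.card_eq_zero, Finset.filter_eq_empty_iff]
        intro i _ h
        exact h.2.1
    have h31 : occ2_31 π = ∑ m : Fin N,
        (univ.filter (fun i => i < Fin.castSucc m ∧
          π (Fin.succ m) < π i ∧ π i < π (Fin.castSucc m))).card := by
      rw [occ2_31, card_prod_eq_sum
        (fun (i : Fin (N+1)) (q : Fin (N+1) × Fin (N+1)) =>
          i < q.1 ∧ (q.1 : ℕ) + 1 = (q.2 : ℕ) ∧ π q.2 < π i ∧ π i < π q.1)]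
      rw [← sum_adj_pairs (fun q => (univ.filter
        (fun i => i < q.1 ∧ π q.2 < π i ∧ π i < π q.1)).card)]
      rw [Finset.sum_filter]
      apply Finset.sum_congr rfl
      intro q _
      by_cases hadj : (q.1 : ℕ) + 1 = (q.2 : ℕ)
      · simp only [hadj, if_true]
        congr 1
        apply Finset.filter_congr
        intro i _
        simp [hadj]
      · simp only [hadj, if_false]
        rw [Finset.card_eq_zero, Finset.filter_eq_empty_iff]
        intro i _ h
        exact h.2.1
    have hdes : des π = ∑ m : Fin N,
        (if π (Fin.succ m) < π (Fin.castSucc m) then 1 else 0) := by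
      rw [des, ← Finset.filter_filter, Finset.card_filter]
      exact sum_adj_pairs (fun q => if π q.2 < π q.1 then 1 else 0)
    -- per-pair key identity
    have key : ∀ m : Fin N,
        (univ.filter (fun i => i < Fin.castSucc m ∧
          π (Fin.castSucc m) < π i ∧ π i < π (Fin.succ m))).card + F (Fin.succ m)
        = (univ.filter (fun i => i < Fin.castSucc m ∧
          π (Fin.succ m) < π i ∧ π i < π (Fin.castSucc m))).card +
          ((if π (Fin.succ m) < π (Fin.castSucc m) then 1 else 0) + F (Fin.castSucc m)) := by
      intro m
      have hmid : (if π (Fin.succ m) < π (Fin.castSucc m) then (1:ℕ) else 0)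
          = ∑ i : Fin (N+1),
            if i = Fin.castSucc m ∧ π (Fin.succ m) < π (Fin.castSucc m) then 1 else 0 := by
        by_cases h : π (Fin.succ m) < π (Fin.castSucc m) <;> simp [h]
      rw [hF, hmid]
      simp only [Finset.card_filter, ← Finset.sum_add_distrib]
      apply Finset.sum_congr rfl
      intro i _
      have hab : ((π i : ℕ)) = (π (Fin.castSucc m) : ℕ) ↔ (i : ℕ) = (Fin.castSucc m : ℕ) := by
        rw [Fin.val_eq_val, Fin.val_eq_val, EmbeddingLike.apply_eq_iff_eq]
      have hac : ((π i : ℕ)) = (π (Fin.succ m) : ℕ) ↔ (i : ℕ) = (Fin.succ m : ℕ) := by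
        rw [Fin.val_eq_val, Fin.val_eq_val, EmbeddingLike.apply_eq_iff_eq]
      have hbc : ((π (Fin.castSucc m) : ℕ)) = (π (Fin.succ m) : ℕ)
          ↔ (Fin.castSucc m : ℕ) = (Fin.succ m : ℕ) := by
        rw [Fin.val_eq_val, Fin.val_eq_val, EmbeddingLike.apply_eq_iff_eq]
      have hjk : (Fin.castSucc m : ℕ) + 1 = (Fin.succ m : ℕ) := by
        simp [Fin.val_succ]
      simp only [Fin.lt_def, Fin.ext_iff]
      split_ifs <;> omega
    -- telescoping
    have hF0 : F 0 = 0 := by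
      rw [hF]
      rw [Finset.card_eq_zero, Finset.filter_eq_empty_iff]
      intro i _ h
      exact absurd h.1 (Fin.not_lt_zero i)
    have tele : ∑ m : Fin N, F (Fin.succ m)
        = ∑ m : Fin N, F (Fin.castSucc m) + F (Fin.last N) := by
      have h1 : ∑ i : Fin (N+1), F i = F 0 + ∑ m : Fin N, F (Fin.succ m) :=
        Fin.sum_univ_succ F
      have h2 : ∑ i : Fin (N+1), F i = ∑ m : Fin N, F (Fin.castSucc m) + F (Fin.last N) :=
        Fin.sum_univ_castSucc F
      omega
    have H : ∑ m : Fin N, ((univ.filter (fun i => i < Fin.castSucc m ∧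
          π (Fin.castSucc m) < π i ∧ π i < π (Fin.succ m))).card + F (Fin.succ m))
        = ∑ m : Fin N, ((univ.filter (fun i => i < Fin.castSucc m ∧
          π (Fin.succ m) < π i ∧ π i < π (Fin.castSucc m))).card +
          ((if π (Fin.succ m) < π (Fin.castSucc m) then 1 else 0) + F (Fin.castSucc m))) :=
      Finset.sum_congr rfl (fun m _ => key m)
    simp only [Finset.sum_add_distrib] at H
    omega
end

section
/- For any permutation π, the number of occurrences of the vincular pattern 2-\underline{13} in π ⊕ 1 equals the number of occurrences of 2-\underline{31} in π plus the number of descents of π. -/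
open Equiv Finset

namespace Stmt10

def w {n : ℕ} (π : Equiv.Perm (Fin n)) (m : ℕ) : ℕ :=
  if h : m < n then (π ⟨m, h⟩ : ℕ) else n

lemma w_lt_n {n : ℕ} (π : Equiv.Perm (Fin n)) {m : ℕ} (h : m < n) : w π m < n := by
  rw [w, dif_pos h]; exact (π ⟨m, h⟩).isLt

lemma w_le_n {n : ℕ} (π : Equiv.Perm (Fin n)) (m : ℕ) : w π m ≤ n := by
  rw [w]; split
  · exact (π ⟨m, _⟩).isLt.le
  · exact le_rfl

lemma w_of_ge {n : ℕ} (π : Equiv.Perm (Fin n)) {m : ℕ} (h : n ≤ m) : w π m = n := by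
  rw [w, dif_neg (not_lt.2 h)]

lemma w_ne {n : ℕ} (π : Equiv.Perm (Fin n)) {a b : ℕ} (ha : a < n) (hb : b < n)
    (hab : a ≠ b) : w π a ≠ w π b := by
  rw [w, w, dif_pos ha, dif_pos hb]
  intro hc
  exact hab (by simpa using congrArg Fin.val (π.injective (Fin.ext hc)))

lemma w_val {n : ℕ} (π : Equiv.Perm (Fin n)) (k : Fin n) : w π (k : ℕ) = (π k : ℕ) := by
  rw [w, dif_pos k.isLt]

lemma dsum_val {n : ℕ} (π : Equiv.Perm (Fin n)) (k : Fin (n + 1)) :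
    ((dsum π (1 : Equiv.Perm (Fin 1))) k : ℕ) = w π (k : ℕ) := by
  simp only [dsum, Equiv.trans_apply, Equiv.sumCongr_apply, w]
  rcases lt_or_ge (k : ℕ) n with h | h
  · rw [dif_pos h]
    have hk : k = Fin.castAdd 1 ⟨(k : ℕ), h⟩ := Fin.ext rfl
    conv_lhs => rw [hk, finSumFinEquiv_symm_apply_castAdd]
    simp
  · rw [dif_neg (not_lt.2 h)]
    have hk : k = Fin.natAdd n ⟨0, Nat.one_pos⟩ := Fin.ext (by have := k.isLt; simp; omega)
    conv_lhs => rw [hk, finSumFinEquiv_symm_apply_natAdd]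
    simp

lemma occ2_13_dsum {n : ℕ} (π : Equiv.Perm (Fin n)) :
    occ2_13 (dsum π (1 : Equiv.Perm (Fin 1))) =
      ∑ i ∈ range (n + 1), ∑ j ∈ range (n + 1),
        if i < j ∧ j + 1 ≤ n ∧ w π j < w π i ∧ w π i < w π (j + 1) then 1 else 0 := by
  have hr : (∑ i ∈ range (n + 1), ∑ j ∈ range (n + 1),
        if i < j ∧ j + 1 ≤ n ∧ w π j < w π i ∧ w π i < w π (j + 1) then 1 else 0)
      = (((range (n + 1)) ×ˢ (range (n + 1))).filter
          (fun p : ℕ × ℕ => p.1 < p.2 ∧ p.2 + 1 ≤ n ∧ w π p.2 < w π p.1 ∧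
            w π p.1 < w π (p.2 + 1))).card := by
    rw [Finset.card_filter, Finset.sum_product]
  rw [hr, occ2_13]
  apply Finset.card_bij (fun p _ => ((p.1 : ℕ), (p.2.1 : ℕ)))
  · rintro ⟨a, b, c⟩ hp
    simp only [mem_filter, mem_univ, true_and] at hp
    obtain ⟨h1, h2, h3, h4⟩ := hp
    have hv1 := dsum_val π a
    have hv2 := dsum_val π b
    have hv3 := dsum_val π c
    simp only [mem_filter, mem_product, mem_range]
    refine ⟨⟨a.isLt, b.isLt⟩, h1, ?_, ?_, ?_⟩
    · have := c.isLt; omega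
    · rw [Fin.lt_def] at h3; omega
    · rw [Fin.lt_def] at h4; rw [← h2] at hv3; omega
  · rintro ⟨a, b, c⟩ hp ⟨a', b', c'⟩ hp' heq
    simp only [mem_filter, mem_univ, true_and] at hp hp'
    simp only [Prod.mk.injEq] at heq
    have : (c : ℕ) = (c' : ℕ) := by omega
    exact Prod.ext (Fin.ext heq.1) (Prod.ext (Fin.ext heq.2) (Fin.ext this))
  · rintro ⟨x, y⟩ hb
    simp only [mem_filter, mem_product, mem_range] at hb
    obtain ⟨⟨hx, hy⟩, h1, h2, h3, h4⟩ := hb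
    refine ⟨(⟨x, hx⟩, ⟨y, hy⟩, ⟨y + 1, by omega⟩), ?_, rfl⟩
    simp only [mem_filter, mem_univ, true_and]
    have hv1 := dsum_val π (⟨x, hx⟩ : Fin (n + 1))
    have hv2 := dsum_val π (⟨y, hy⟩ : Fin (n + 1))
    have hv3 := dsum_val π (⟨y + 1, by omega⟩ : Fin (n + 1))
    simp only [Fin.val_mk] at hv1 hv2 hv3
    refine ⟨?_, ?_, ?_⟩
    · simp [Fin.lt_def]; omega
    · rw [Fin.lt_def]; omega
    · rw [Fin.lt_def]; omega

lemma occ2_31_eq {n : ℕ} (π : Equiv.Perm (Fin n)) :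
    occ2_31 π = ∑ i ∈ range n, ∑ j ∈ range n,
      if i < j ∧ j + 1 < n ∧ w π (j + 1) < w π i ∧ w π i < w π j then 1 else 0 := by
  have hr : (∑ i ∈ range n, ∑ j ∈ range n,
        if i < j ∧ j + 1 < n ∧ w π (j + 1) < w π i ∧ w π i < w π j then 1 else 0)
      = (((range n) ×ˢ (range n)).filter
          (fun p : ℕ × ℕ => p.1 < p.2 ∧ p.2 + 1 < n ∧ w π (p.2 + 1) < w π p.1 ∧
            w π p.1 < w π p.2)).card := by
    rw [Finset.card_filter, Finset.sum_product]
  rw [hr, occ2_31]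
  apply Finset.card_bij (fun p _ => ((p.1 : ℕ), (p.2.1 : ℕ)))
  · rintro ⟨a, b, c⟩ hp
    simp only [mem_filter, mem_univ, true_and] at hp
    obtain ⟨h1, h2, h3, h4⟩ := hp
    have hv1 := w_val π a
    have hv2 := w_val π b
    have hv3 := w_val π c
    simp only [mem_filter, mem_product, mem_range]
    refine ⟨⟨a.isLt, b.isLt⟩, h1, ?_, ?_, ?_⟩
    · have := c.isLt; omega
    · rw [Fin.lt_def] at h3; rw [← h2] at hv3; omega
    · rw [Fin.lt_def] at h4; omega
  · rintro ⟨a, b, c⟩ hp ⟨a', b', c'⟩ hp' heq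
    simp only [mem_filter, mem_univ, true_and] at hp hp'
    simp only [Prod.mk.injEq] at heq
    have : (c : ℕ) = (c' : ℕ) := by omega
    exact Prod.ext (Fin.ext heq.1) (Prod.ext (Fin.ext heq.2) (Fin.ext this))
  · rintro ⟨x, y⟩ hb
    simp only [mem_filter, mem_product, mem_range] at hb
    obtain ⟨⟨hx, hy⟩, h1, h2, h3, h4⟩ := hb
    refine ⟨(⟨x, hx⟩, ⟨y, hy⟩, ⟨y + 1, h2⟩), ?_, rfl⟩
    simp only [mem_filter, mem_univ, true_and]
    have hv1 := w_val π (⟨x, hx⟩ : Fin n)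
    have hv2 := w_val π (⟨y, hy⟩ : Fin n)
    have hv3 := w_val π (⟨y + 1, h2⟩ : Fin n)
    simp only [Fin.val_mk] at hv1 hv2 hv3
    refine ⟨?_, ?_, ?_⟩
    · simp [Fin.lt_def]; omega
    · rw [Fin.lt_def]; omega
    · rw [Fin.lt_def]; omega

lemma des_eq {n : ℕ} (π : Equiv.Perm (Fin n)) :
    des π = ∑ i ∈ range n, if i + 1 < n ∧ w π (i + 1) < w π i then 1 else 0 := by
  have hr : (∑ i ∈ range n, if i + 1 < n ∧ w π (i + 1) < w π i then 1 else 0)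
      = ((range n).filter (fun i => i + 1 < n ∧ w π (i + 1) < w π i)).card := by
    rw [Finset.card_filter]
  rw [hr, des]
  apply Finset.card_bij (fun p _ => (p.1 : ℕ))
  · rintro ⟨a, b⟩ hp
    simp only [mem_filter, mem_univ, true_and] at hp
    obtain ⟨h1, h2⟩ := hp
    have hv1 := w_val π a
    have hv2 := w_val π b
    simp only [mem_filter, mem_range]
    refine ⟨a.isLt, ?_, ?_⟩
    · have := b.isLt; omega
    · rw [Fin.lt_def] at h2; rw [← h1] at hv2; omega
  · rintro ⟨a, b⟩ hp ⟨a', b'⟩ hp' heq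
    simp only [mem_filter, mem_univ, true_and] at hp hp'
    dsimp only at heq
    have : (b : ℕ) = (b' : ℕ) := by omega
    exact Prod.ext (Fin.ext heq) (Fin.ext this)
  · rintro x hb
    simp only [mem_filter, mem_range] at hb
    obtain ⟨hx, h1, h2⟩ := hb
    refine ⟨(⟨x, hx⟩, ⟨x + 1, h1⟩), ?_, rfl⟩
    simp only [mem_filter, mem_univ, true_and]
    have hv1 := w_val π (⟨x, hx⟩ : Fin n)
    have hv2 := w_val π (⟨x + 1, h1⟩ : Fin n)
    simp only [Fin.val_mk] at hv1 hv2
    rw [Fin.lt_def]; omega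

lemma key {n : ℕ} (π : Equiv.Perm (Fin n)) (i : ℕ) (hi : i < n) :
    (∑ j ∈ range (n + 1), if i < j ∧ j + 1 ≤ n ∧ w π j < w π i ∧ w π i < w π (j + 1)
        then 1 else 0)
    = (∑ j ∈ range n, if i < j ∧ j + 1 < n ∧ w π (j + 1) < w π i ∧ w π i < w π j
        then 1 else 0)
      + (if i + 1 < n ∧ w π (i + 1) < w π i then 1 else 0) := by
  -- restrict both sums to Ico (i+1) n
  have hL : (∑ j ∈ range (n + 1), if i < j ∧ j + 1 ≤ n ∧ w π j < w π i ∧ w π i < w π (j + 1)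
        then 1 else 0)
      = ∑ j ∈ Ico (i + 1) n, (if w π j < w π i ∧ w π i < w π (j + 1) then 1 else 0) := by
    rw [show (Ico (i+1) n) = (range (n+1)).filter (fun j => i < j ∧ j + 1 ≤ n) by
      ext j; simp [Finset.mem_filter, Finset.mem_Ico]; omega]
    rw [Finset.sum_filter]
    apply Finset.sum_congr rfl
    intro j _
    by_cases h : i < j ∧ j + 1 ≤ n
    · simp [h]
    · simp only [h, if_false]
      rw [if_neg]; tauto
  have hR : (∑ j ∈ range n, if i < j ∧ j + 1 < n ∧ w π (j + 1) < w π i ∧ w π i < w π j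
        then 1 else 0)
      = ∑ j ∈ Ico (i + 1) n, (if w π (j + 1) < w π i ∧ w π i < w π j then 1 else 0) := by
    rw [show (Ico (i+1) n) = (range n).filter (fun j => i < j) by
      ext j; simp [Finset.mem_filter, Finset.mem_Ico]; omega]
    rw [Finset.sum_filter]
    apply Finset.sum_congr rfl
    intro j hj
    rw [Finset.mem_range] at hj
    by_cases h : i < j
    · simp only [h, if_true, true_and]
      by_cases h2 : j + 1 < n
      · simp [h2]
      · have hj1 : j + 1 = n := by omega
        rw [if_neg (by tauto), if_neg]
        rintro ⟨hc, -⟩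
        rw [w_of_ge π hj1.ge] at hc
        exact absurd hc (not_lt.2 (w_lt_n π hi).le)
    · simp [h]
  rw [hL, hR]
  -- now work in ℤ
  set f : ℕ → ℤ := fun m => if w π i < w π m then 1 else 0 with hf
  have tel : ∑ j ∈ Ico (i + 1) n, (f (j + 1) - f j) = f n - f (i + 1) := by
    rw [Finset.sum_Ico_eq_sum_range]
    have h2 := Finset.sum_range_sub (fun t => f (i + 1 + t)) (n - (i + 1))
    rw [show i + 1 + (n - (i + 1)) = n by omega] at h2
    rw [← h2]
    apply Finset.sum_congr rfl
    intro t _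
    have ht : i + 1 + t + 1 = i + 1 + (t + 1) := by omega
    rw [ht]
  have step : ∀ j ∈ Ico (i + 1) n,
      ((if w π j < w π i ∧ w π i < w π (j + 1) then (1:ℤ) else 0)
        - (if w π (j + 1) < w π i ∧ w π i < w π j then 1 else 0)) = f (j + 1) - f j := by
    intro j hj
    rw [Finset.mem_Ico] at hj
    have hne1 : w π j ≠ w π i := w_ne π hj.2 hi (by omega)
    have hne2 : w π (j + 1) ≠ w π i := by
      rcases lt_or_ge (j + 1) n with h | h
      · exact w_ne π h hi (by omega)
      · rw [w_of_ge π h]; exact (w_lt_n π hi).ne'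
    simp only [hf]
    split_ifs <;> omega
  have hsum : (∑ j ∈ Ico (i + 1) n, (if w π j < w π i ∧ w π i < w π (j + 1) then (1:ℤ) else 0))
      - (∑ j ∈ Ico (i + 1) n, (if w π (j + 1) < w π i ∧ w π i < w π j then (1:ℤ) else 0))
      = f n - f (i + 1) := by
    rw [← Finset.sum_sub_distrib, ← tel]
    exact Finset.sum_congr rfl step
  have hfn : f n = 1 := by
    simp only [hf]
    rw [w_of_ge π le_rfl, if_pos (w_lt_n π hi)]
  have hd : (if i + 1 < n ∧ w π (i + 1) < w π i then (1:ℤ) else 0) = 1 - f (i + 1) := by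
    simp only [hf]
    rcases lt_or_ge (i + 1) n with h | h
    · have hne : w π (i + 1) ≠ w π i := w_ne π h hi (by omega)
      split_ifs <;> omega
    · rw [w_of_ge π h]
      rw [if_neg (by omega), if_pos (w_lt_n π hi)]
      ring
  -- conclude over ℤ then cast back
  have final : (∑ j ∈ Ico (i + 1) n, (if w π j < w π i ∧ w π i < w π (j + 1) then (1:ℤ) else 0))
      = (∑ j ∈ Ico (i + 1) n, (if w π (j + 1) < w π i ∧ w π i < w π j then (1:ℤ) else 0))
        + (if i + 1 < n ∧ w π (i + 1) < w π i then (1:ℤ) else 0) := by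
    rw [hd]; rw [hfn] at hsum; omega
  have cast1 : ((∑ j ∈ Ico (i + 1) n,
      (if w π j < w π i ∧ w π i < w π (j + 1) then (1:ℕ) else 0) : ℕ) : ℤ)
      = ∑ j ∈ Ico (i + 1) n, (if w π j < w π i ∧ w π i < w π (j + 1) then (1:ℤ) else 0) := by
    push_cast [apply_ite (fun x : ℕ => (x : ℤ))]
    rfl
  have cast2 : ((∑ j ∈ Ico (i + 1) n,
      (if w π (j + 1) < w π i ∧ w π i < w π j then (1:ℕ) else 0) : ℕ) : ℤ)
      = ∑ j ∈ Ico (i + 1) n, (if w π (j + 1) < w π i ∧ w π i < w π j then (1:ℤ) else 0) := by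
    push_cast [apply_ite (fun x : ℕ => (x : ℤ))]
    rfl
  have cast3 : ((if i + 1 < n ∧ w π (i + 1) < w π i then (1:ℕ) else 0) : ℤ)
      = (if i + 1 < n ∧ w π (i + 1) < w π i then (1:ℤ) else 0) := by
    split_ifs <;> rfl
  have := cast1.trans (final.trans (by rw [← cast2, ← cast3]))
  exact_mod_cast this


end Stmt10

theorem stmt10 (n : ℕ) (π : Equiv.Perm (Fin n)) :
    occ2_13 (dsum π (1 : Equiv.Perm (Fin 1))) = occ2_31 π + des π := by
  rw [Stmt10.occ2_13_dsum, Stmt10.occ2_31_eq, Stmt10.des_eq]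
  rw [Finset.sum_range_succ]
  have htop : (∑ j ∈ Finset.range (n + 1),
      if n < j ∧ j + 1 ≤ n ∧ Stmt10.w π j < Stmt10.w π n ∧ Stmt10.w π n < Stmt10.w π (j + 1)
      then 1 else 0) = 0 := by
    apply Finset.sum_eq_zero
    intro j _
    rw [if_neg]
    rintro ⟨-, -, -, h4⟩
    have h5 := Stmt10.w_le_n π (j + 1)
    rw [Stmt10.w_of_ge π le_rfl] at h4
    omega
  rw [htop, add_zero, ← Finset.sum_add_distrib]
  exact Finset.sum_congr rfl (fun i hi => Stmt10.key π i (Finset.mem_range.1 hi))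
end

section
/- For any π ∈ S_n(132), the inverse permutation π^{-1} also avoids 132, and des(π^{-1}) = des(π); moreover the number of occurrences of the vincular pattern \underline{23}-1 in π^{-1} equals the number of occurrences of 3-\underline{12} in π, and the number of occurrences of 3-\underline{12} in π^{-1} equals the number of occurrences of \underline{23}-1 in π. -/
open Equiv Finset

section Aux

theorem Equiv.Perm.apply_inv_self {α : Type*} (f : Equiv.Perm α) (x : α) : f (f⁻¹ x) = x :=
  Equiv.apply_symm_apply f x

theorem Equiv.Perm.inv_apply_self {α : Type*} (f : Equiv.Perm α) (x : α) : f⁻¹ (f x) = x :=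
  Equiv.symm_apply_apply f x


/-- predecessor on Fin n (clamped at 0) -/
def fpred {n : ℕ} (x : Fin n) : Fin n :=
  ⟨(x : ℕ) - 1, lt_of_le_of_lt (Nat.sub_le _ _) x.isLt⟩

lemma avoid_elim {n : ℕ} {π : Equiv.Perm (Fin n)} (h : avoids132 π)
    {i j k : Fin n} (hij : i < j) (hjk : j < k) (h1 : π i < π k) (h2 : π k < π j) :
    False := h ⟨i, j, k, hij, hjk, h1, h2⟩

lemma claimA {n : ℕ} {π : Equiv.Perm (Fin n)} (h : avoids132 π)
    {i j : Fin n} (hij : (i : ℕ) + 1 = (j : ℕ)) (hlt : π i < π j) :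
    π⁻¹ (fpred (π j)) < j := by
  set a := π⁻¹ (fpred (π j)) with ha
  have hpa : π a = fpred (π j) := Equiv.Perm.apply_inv_self _ _
  have hpa' : (π a : ℕ) = (π j : ℕ) - 1 := by rw [hpa]; rfl
  have hwpos : 1 ≤ (π j : ℕ) := by
    have := Fin.lt_def.1 hlt; omega
  have hane : a ≠ j := by
    intro he
    have : (π a : ℕ) = (π j : ℕ) := by rw [he]
    omega
  by_contra hc
  have hja : j < a := lt_of_le_of_ne (not_lt.1 hc) (Ne.symm hane)
  have hia : i ≠ a := by
    intro he; rw [he] at hij; have := Fin.lt_def.1 hja; omega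
  have hpi : (π i : ℕ) < (π j : ℕ) - 1 := by
    have h1 : (π i : ℕ) < (π j : ℕ) := hlt
    have h2 : (π i : ℕ) ≠ (π a : ℕ) := by
      intro he
      exact hia (π.injective (Fin.ext he))
    omega
  exact avoid_elim h (show i < j from Fin.lt_def.2 (by omega)) hja
    (show π i < π a from Fin.lt_def.2 (by omega))
    (show π a < π j from Fin.lt_def.2 (by omega))

lemma claimB {n : ℕ} {π : Equiv.Perm (Fin n)} (h : avoids132 π)
    {q1 q2 : Fin n} (hq : (q1 : ℕ) + 1 = (q2 : ℕ)) (hlt : π⁻¹ q1 < π⁻¹ q2) :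
    π (fpred (π⁻¹ q2)) < q2 := by
  set a := π⁻¹ q1 with hA
  set b := π⁻¹ q2 with hB
  set d := fpred b with hD
  have hpb : π b = q2 := Equiv.Perm.apply_inv_self _ _
  have hpa : π a = q1 := Equiv.Perm.apply_inv_self _ _
  have hbpos : 1 ≤ (b : ℕ) := by
    have := Fin.lt_def.1 hlt; omega
  have hdb : (d : ℕ) = (b : ℕ) - 1 := rfl
  have hdne : d ≠ b := by
    intro he; have := congrArg Fin.val he; rw [hdb] at this; omega
  have hne : π d ≠ q2 := by
    intro he; exact hdne (π.injective (by rw [hpb, he]))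
  by_contra hc
  have hq2d : q2 < π d := lt_of_le_of_ne (not_lt.1 hc) (Ne.symm hne)
  have had : a ≠ d := by
    intro he
    rw [← he, hpa] at hq2d
    have := Fin.lt_def.1 hq2d; omega
  have halt : a < d := by
    have h1 : (a : ℕ) < (b : ℕ) := hlt
    have h2 : (a : ℕ) ≠ (d : ℕ) := fun he => had (Fin.ext he)
    exact Fin.lt_def.2 (by omega)
  have hdlt : d < b := Fin.lt_def.2 (by omega)
  exact avoid_elim h halt hdlt
    (show π a < π b from by rw [hpa, hpb]; exact Fin.lt_def.2 (by omega))
    (by rw [hpb]; exact hq2d)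

lemma claimC {n : ℕ} {π : Equiv.Perm (Fin n)} (h : avoids132 π)
    {x j : Fin n} (hxj : x < j) (hlt : π j < π x) (hpos : 1 ≤ (π j : ℕ)) :
    x < π⁻¹ (fpred (π j)) := by
  set a := π⁻¹ (fpred (π j)) with ha
  have hpa : π a = fpred (π j) := Equiv.Perm.apply_inv_self _ _
  have hpa' : (π a : ℕ) = (π j : ℕ) - 1 := by rw [hpa]; rfl
  have hane : a ≠ x := by
    intro he
    have : (π a : ℕ) = (π x : ℕ) := by rw [he]
    have := Fin.lt_def.1 hlt
    omega
  by_contra hc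
  have hax : a < x := lt_of_le_of_ne (not_lt.1 hc) hane
  exact avoid_elim h hax hxj
    (show π a < π j from Fin.lt_def.2 (by omega)) hlt

lemma inv_avoids {n : ℕ} {π : Equiv.Perm (Fin n)} (h : avoids132 π) :
    avoids132 π⁻¹ := by
  rintro ⟨i, j, k, hij, hjk, h1, h2⟩
  refine h ⟨π⁻¹ i, π⁻¹ k, π⁻¹ j, h1, h2, ?_, ?_⟩ <;>
    simp only [Equiv.Perm.apply_inv_self]
  · exact hij
  · exact hjk

lemma asc_card_eq {n : ℕ} {π : Equiv.Perm (Fin n)} (h : avoids132 π) :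
    (Finset.univ.filter (fun p : Fin n × Fin n =>
      (p.1 : ℕ) + 1 = (p.2 : ℕ) ∧ π⁻¹ p.1 < π⁻¹ p.2)).card =
    (Finset.univ.filter (fun p : Fin n × Fin n =>
      (p.1 : ℕ) + 1 = (p.2 : ℕ) ∧ π p.1 < π p.2)).card := by
  refine Finset.card_nbij' (fun q => (fpred (π⁻¹ q.2), π⁻¹ q.2))
    (fun p => (fpred (π p.2), π p.2)) ?_ ?_ ?_ ?_
  · rintro ⟨q1, q2⟩ hq
    simp only [Finset.mem_coe, Finset.mem_filter, Finset.mem_univ, true_and] at hq ⊢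
    obtain ⟨hq12, hqlt⟩ := hq
    have hbpos : 1 ≤ ((π⁻¹ q2 : Fin n) : ℕ) := by
      have := Fin.lt_def.1 hqlt; omega
    constructor
    · show ((π⁻¹ q2 : Fin n) : ℕ) - 1 + 1 = _
      omega
    · have := claimB h hq12 hqlt
      rw [Equiv.Perm.apply_inv_self]
      exact this
  · rintro ⟨p1, p2⟩ hp
    simp only [Finset.mem_coe, Finset.mem_filter, Finset.mem_univ, true_and] at hp ⊢
    obtain ⟨hp12, hplt⟩ := hp
    have hwpos : 1 ≤ ((π p2 : Fin n) : ℕ) := by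
      have := Fin.lt_def.1 hplt; omega
    constructor
    · show ((π p2 : Fin n) : ℕ) - 1 + 1 = _
      omega
    · have := claimA h hp12 hplt
      rwa [Equiv.Perm.inv_apply_self]
  · rintro ⟨q1, q2⟩ hq
    simp only [Finset.mem_coe, Finset.mem_filter, Finset.mem_univ, true_and] at hq
    obtain ⟨hq12, hqlt⟩ := hq
    simp only [Equiv.Perm.apply_inv_self]
    exact Prod.ext (Fin.ext (by show (q2 : ℕ) - 1 = (q1 : ℕ); omega)) rfl
  · rintro ⟨p1, p2⟩ hp
    simp only [Finset.mem_coe, Finset.mem_filter, Finset.mem_univ, true_and] at hp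
    obtain ⟨hp12, hplt⟩ := hp
    simp only [Equiv.Perm.inv_apply_self]
    exact Prod.ext (Fin.ext (by show (p2 : ℕ) - 1 = (p1 : ℕ); omega)) rfl

lemma des_add_asc {n : ℕ} (σ : Equiv.Perm (Fin n)) :
    des σ + (Finset.univ.filter (fun p : Fin n × Fin n =>
      (p.1 : ℕ) + 1 = (p.2 : ℕ) ∧ σ p.1 < σ p.2)).card =
    (Finset.univ.filter (fun p : Fin n × Fin n =>
      (p.1 : ℕ) + 1 = (p.2 : ℕ))).card := by
  classical
  have h1 : des σ = ((Finset.univ.filter (fun p : Fin n × Fin n =>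
      (p.1 : ℕ) + 1 = (p.2 : ℕ))).filter (fun p => σ p.2 < σ p.1)).card := by
    rw [Finset.filter_filter]; rfl
  have h2 : (Finset.univ.filter (fun p : Fin n × Fin n =>
      (p.1 : ℕ) + 1 = (p.2 : ℕ) ∧ σ p.1 < σ p.2)).card =
      ((Finset.univ.filter (fun p : Fin n × Fin n =>
      (p.1 : ℕ) + 1 = (p.2 : ℕ))).filter (fun p => ¬ σ p.2 < σ p.1)).card := by
    rw [Finset.filter_filter]
    congr 1
    apply Finset.filter_congr
    rintro ⟨p1, p2⟩ _
    simp only [Finset.mem_univ, true_and]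
    constructor
    · rintro ⟨ha, hb⟩; exact ⟨ha, not_lt.2 (le_of_lt hb)⟩
    · rintro ⟨ha, hb⟩
      refine ⟨ha, lt_of_le_of_ne (not_lt.1 hb) ?_⟩
      intro he
      have : p2 = p1 := σ.injective he.symm
      have := congrArg Fin.val this
      omega
  rw [h1, h2]
  exact Finset.card_filter_add_card_filter_not _

lemma des_inv {n : ℕ} {π : Equiv.Perm (Fin n)} (h : avoids132 π) :
    des π⁻¹ = des π := by
  have h1 := des_add_asc π
  have h2 := des_add_asc π⁻¹
  rw [asc_card_eq h] at h2
  omega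

lemma occ_key {n : ℕ} {π : Equiv.Perm (Fin n)} (h : avoids132 π) :
    occ23_1 π⁻¹ = occ3_12 π := by
  unfold occ23_1 occ3_12
  show (Finset.univ.filter (fun p : Fin n × Fin n × Fin n =>
      (p.1 : ℕ) + 1 = (p.2.1 : ℕ) ∧ p.2.1 < p.2.2 ∧
        π⁻¹ p.2.2 < π⁻¹ p.1 ∧ π⁻¹ p.1 < π⁻¹ p.2.1)).card =
    (Finset.univ.filter (fun p : Fin n × Fin n × Fin n =>
      p.1 < p.2.1 ∧ (p.2.1 : ℕ) + 1 = (p.2.2 : ℕ) ∧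
        π p.2.1 < π p.2.2 ∧ π p.2.2 < π p.1)).card
  refine Finset.card_nbij'
    (fun q => (π⁻¹ q.2.2, fpred (π⁻¹ q.2.1), π⁻¹ q.2.1))
    (fun p => (fpred (π p.2.2), π p.2.2, π p.1)) ?_ ?_ ?_ ?_
  · rintro ⟨q1, q2, q3⟩ hq
    simp only [Finset.mem_coe, Finset.mem_filter, Finset.mem_univ, true_and] at hq ⊢
    obtain ⟨hq12, hq23, hc1, hc2⟩ := hq
    have hab : ((π⁻¹ q1 : Fin n) : ℕ) < ((π⁻¹ q2 : Fin n) : ℕ) := hc2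
    have hca : ((π⁻¹ q3 : Fin n) : ℕ) < ((π⁻¹ q1 : Fin n) : ℕ) := hc1
    refine ⟨Fin.lt_def.2 (by show _ < ((π⁻¹ q2 : Fin n) : ℕ) - 1; omega),
      (by show ((π⁻¹ q2 : Fin n) : ℕ) - 1 + 1 = _; omega), ?_, ?_⟩
    · have := claimB h hq12 hc2
      rw [Equiv.Perm.apply_inv_self]
      exact this
    · simp only [Equiv.Perm.apply_inv_self]
      exact hq23
  · rintro ⟨p1, p2, p3⟩ hp
    simp only [Finset.mem_coe, Finset.mem_filter, Finset.mem_univ, true_and] at hp ⊢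
    obtain ⟨hp12, hp23, hv1, hv2⟩ := hp
    have hwpos : 1 ≤ ((π p3 : Fin n) : ℕ) := by
      have := Fin.lt_def.1 hv1; omega
    have hp13 : p1 < p3 := by
      have h1 := Fin.lt_def.1 hp12
      exact Fin.lt_def.2 (by omega)
    refine ⟨(by show ((π p3 : Fin n) : ℕ) - 1 + 1 = _; omega),
      hv2, ?_, ?_⟩
    · rw [Equiv.Perm.inv_apply_self]
      exact claimC h hp13 hv2 hwpos
    · rw [Equiv.Perm.inv_apply_self]
      exact claimA h hp23 hv1
  · rintro ⟨q1, q2, q3⟩ hq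
    simp only [Finset.mem_coe, Finset.mem_filter, Finset.mem_univ, true_and] at hq
    obtain ⟨hq12, _, _, _⟩ := hq
    simp only [Equiv.Perm.apply_inv_self]
    refine Prod.ext (Fin.ext ?_) rfl
    show (q2 : ℕ) - 1 = (q1 : ℕ); omega
  · rintro ⟨p1, p2, p3⟩ hp
    simp only [Finset.mem_coe, Finset.mem_filter, Finset.mem_univ, true_and] at hp
    obtain ⟨_, hp23, _, _⟩ := hp
    simp only [Equiv.Perm.inv_apply_self]
    refine Prod.ext rfl (Prod.ext (Fin.ext ?_) rfl)
    show (p3 : ℕ) - 1 = (p2 : ℕ); omega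

end Aux

theorem stmt14 (n : ℕ) (π : Equiv.Perm (Fin n)) (h : avoids132 π) :
    avoids132 π⁻¹ ∧ des π⁻¹ = des π ∧
      occ23_1 π⁻¹ = occ3_12 π ∧ occ3_12 π⁻¹ = occ23_1 π := by
  refine ⟨inv_avoids h, des_inv h, occ_key h, ?_⟩
  have h2 := occ_key (inv_avoids h)
  rw [inv_inv] at h2
  exact h2.symm
end
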